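/- Let k ∈ ℕ, and let φ be a Parseval frame for H of the form φ_{(i−1)k+j} = α_j e_i^j for i ∈ ℕ, j = 1,…,k, where α_j ∈ ℂ∖{0} and each {e_i^j : i ∈ ℕ} is an orthonormal basis of H. If m ∈ ℓ^∞ is a real sequence, then the spectrum of M_{m,φ,φ} is contained in the interval [Σ_{j=1}^k |α_j|² inf_{i∈ℕ} m_{(i−1)k+j}, Σ_{j=1}^k |α_j|² sup_{i∈ℕ} m_{(i−1)k+j}]. -/

import Mathlib

open scoped InnerProductSpace

/-- for a Parseval frame which is a union of `k` multiples of orthonormal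
bases and a real bounded symbol, the spectrum of `M_{m,φ,φ}` lies in the interval
`[Σ_j |α_j|² inf_i m (i,j), Σ_j |α_j|² sup_i m (i,j)]`. -/
theorem spectrum_multiplier_union_of_onb_real_symbol
    {H : Type*} [NormedAddCommGroup H] [InnerProductSpace ℂ H] [CompleteSpace H]
    (k : ℕ) (hk : 0 < k)
    (e : Fin k → HilbertBasis ℕ ℂ H)
    (α : Fin k → ℂ) (hα : ∀ j, α j ≠ 0)
    (φ : ℕ × Fin k → H) (hφdef : ∀ (i : ℕ) (j : Fin k), φ (i, j) = α j • (e j) i)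
    (hparseval : ∀ f : H, HasSum (fun p : ℕ × Fin k => ‖⟪φ p, f⟫_ℂ‖ ^ 2) (‖f‖ ^ 2))
    (m : ℕ × Fin k → ℝ) (hm : ∃ C : ℝ, ∀ p, |m p| ≤ C)
    (M : H →L[ℂ] H)
    (hM : ∀ f : H, HasSum (fun p : ℕ × Fin k => ((m p : ℂ) * ⟪φ p, f⟫_ℂ) • φ p) (M f)) :
    spectrum ℂ M ⊆
      (fun r : ℝ => (r : ℂ)) ''
        Set.Icc (∑ j : Fin k, ‖α j‖ ^ 2 * ⨅ i : ℕ, m (i, j))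
          (∑ j : Fin k, ‖α j‖ ^ 2 * ⨆ i : ℕ, m (i, j)) := by
  classical
  obtain ⟨C, hC⟩ := hm
  have hbb : ∀ j : Fin k, BddBelow (Set.range fun i : ℕ => m (i, j)) := by
    intro j
    refine ⟨-C, ?_⟩
    rintro x ⟨i, rfl⟩
    linarith [(abs_le.mp (hC (i, j))).1]
  have hba : ∀ j : Fin k, BddAbove (Set.range fun i : ℕ => m (i, j)) := by
    intro j
    exact ⟨C, by rintro x ⟨i, rfl⟩; exact (abs_le.mp (hC (i, j))).2⟩
  set L : ℝ := ∑ j : Fin k, ‖α j‖ ^ 2 * ⨅ i : ℕ, m (i, j) with hLdef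
  set U : ℝ := ∑ j : Fin k, ‖α j‖ ^ 2 * ⨆ i : ℕ, m (i, j) with hUdef
  -- inner product representation
  have hinner : ∀ f g : H,
      HasSum (fun p : ℕ × Fin k => (m p : ℂ) * ⟪φ p, f⟫_ℂ * ⟪g, φ p⟫_ℂ) ⟪g, M f⟫_ℂ := by
    intro f g
    have h := (hM f).mapL (innerSL ℂ g)
    simpa only [innerSL_apply_apply, inner_smul_right] using h
  -- self-adjointness
  have hsa : IsSelfAdjoint M := by
    rw [ContinuousLinearMap.isSelfAdjoint_iff_isSymmetric]
    intro f g
    simp only [ContinuousLinearMap.coe_coe]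
    have h1 := (hinner f g).star
    have key : (fun p : ℕ × Fin k => star ((m p : ℂ) * ⟪φ p, f⟫_ℂ * ⟪g, φ p⟫_ℂ)) =
        fun p : ℕ × Fin k => (m p : ℂ) * ⟪φ p, g⟫_ℂ * ⟪f, φ p⟫_ℂ := by
      funext p
      simp only [star_mul', Complex.star_def, inner_conj_symm, Complex.conj_ofReal]
      ring
    rw [key] at h1
    have h2 := h1.unique (hinner g f)
    rw [← h2, ← inner_conj_symm g (M f), starRingEnd_apply, star_star]
  -- quadratic form
  have hQ : ∀ x : H,
      HasSum (fun p : ℕ × Fin k => m p * ‖⟪φ p, x⟫_ℂ‖ ^ 2) ((⟪x, M x⟫_ℂ).re) := by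
    intro x
    have h := (hinner x x).mapL Complex.reCLM
    have key : (fun p : ℕ × Fin k =>
        Complex.reCLM ((m p : ℂ) * ⟪φ p, x⟫_ℂ * ⟪x, φ p⟫_ℂ)) =
        fun p : ℕ × Fin k => m p * ‖⟪φ p, x⟫_ℂ‖ ^ 2 := by
      funext p
      rw [← inner_conj_symm x (φ p)]
      simp only [Complex.reCLM_apply, mul_assoc, Complex.mul_conj, ← Complex.ofReal_mul,
        Complex.ofReal_re, Complex.normSq_eq_norm_sq]
    rw [key] at h
    simpa using h
  -- Parseval for each block
  have hPj : ∀ (j : Fin k) (x : H),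
      HasSum (fun i : ℕ => ‖⟪φ (i, j), x⟫_ℂ‖ ^ 2) (‖α j‖ ^ 2 * ‖x‖ ^ 2) := by
    intro j x
    have h := ((e j).hasSum_inner_mul_inner x x).mapL Complex.reCLM
    have key : (fun i : ℕ => Complex.reCLM (⟪x, (e j) i⟫_ℂ * ⟪(e j) i, x⟫_ℂ)) =
        fun i : ℕ => ‖⟪(e j) i, x⟫_ℂ‖ ^ 2 := by
      funext i
      rw [← inner_conj_symm x ((e j) i)]
      simp only [Complex.reCLM_apply, ← Complex.normSq_eq_conj_mul_self,
        Complex.ofReal_re, Complex.normSq_eq_norm_sq]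
    rw [key] at h
    have hxx : Complex.reCLM ⟪x, x⟫_ℂ = ‖x‖ ^ 2 := by
      simp [inner_self_eq_norm_sq_to_K, ← Complex.ofReal_pow]
    rw [hxx] at h
    have h2 := h.mul_left (‖α j‖ ^ 2)
    have key2 : (fun i : ℕ => ‖α j‖ ^ 2 * ‖⟪(e j) i, x⟫_ℂ‖ ^ 2) =
        fun i : ℕ => ‖⟪φ (i, j), x⟫_ℂ‖ ^ 2 := by
      funext i
      rw [hφdef, inner_smul_left]
      simp [mul_pow]
    rwa [key2] at h2
  -- lower/upper HasSum helpers
  have hfib : ∀ (c : Fin k → ℝ) (x : H),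
      HasSum (fun p : ℕ × Fin k => c p.2 * ‖⟪φ p, x⟫_ℂ‖ ^ 2)
        (∑ j : Fin k, c j * (‖α j‖ ^ 2 * ‖x‖ ^ 2)) := by
    intro c x
    have hFj : ∀ j : Fin k,
        HasSum (fun p : ℕ × Fin k => if p.2 = j then c j * ‖⟪φ p, x⟫_ℂ‖ ^ 2 else 0)
          (c j * (‖α j‖ ^ 2 * ‖x‖ ^ 2)) := by
      intro j
      have hinj : Function.Injective (fun i : ℕ => ((i, j) : ℕ × Fin k)) := by
        intro a b hab
        simpa using congrArg Prod.fst hab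
      rw [← hinj.hasSum_iff (f := fun p : ℕ × Fin k =>
          if p.2 = j then c j * ‖⟪φ p, x⟫_ℂ‖ ^ 2 else 0)]
      · have hco : ((fun p : ℕ × Fin k => if p.2 = j then c j * ‖⟪φ p, x⟫_ℂ‖ ^ 2 else 0) ∘
            (fun i : ℕ => ((i, j) : ℕ × Fin k))) =
            fun i : ℕ => c j * ‖⟪φ (i, j), x⟫_ℂ‖ ^ 2 := by
          funext i
          simp
        rw [hco]
        exact (hPj j x).mul_left (c j)
      · intro p hp
        have : p.2 ≠ j := by
          intro hpj
          exact hp ⟨p.1, by simp [Prod.ext_iff, hpj.symm]⟩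
        simp [this]
    have hsum := hasSum_sum (s := (Finset.univ : Finset (Fin k)))
      (fun j _ => hFj j)
    have key : (fun p : ℕ × Fin k =>
        ∑ j : Fin k, if p.2 = j then c j * ‖⟪φ p, x⟫_ℂ‖ ^ 2 else 0) =
        fun p : ℕ × Fin k => c p.2 * ‖⟪φ p, x⟫_ℂ‖ ^ 2 := by
      funext p
      simp
    rwa [key] at hsum
  -- quadratic form bounds
  have hlow : ∀ x : H, L * ‖x‖ ^ 2 ≤ (⟪x, M x⟫_ℂ).re := by
    intro x
    have h1 := hfib (fun j => ⨅ i : ℕ, m (i, j)) x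
    have h2 : ∑ j : Fin k, (⨅ i : ℕ, m (i, j)) * (‖α j‖ ^ 2 * ‖x‖ ^ 2) = L * ‖x‖ ^ 2 := by
      rw [hLdef, Finset.sum_mul]
      exact Finset.sum_congr rfl fun j _ => by ring
    rw [h2] at h1
    refine hasSum_le (fun p => ?_) h1 (hQ x)
    exact mul_le_mul_of_nonneg_right (ciInf_le (hbb p.2) p.1) (by positivity)
  have hupp : ∀ x : H, (⟪x, M x⟫_ℂ).re ≤ U * ‖x‖ ^ 2 := by
    intro x
    have h1 := hfib (fun j => ⨆ i : ℕ, m (i, j)) x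
    have h2 : ∑ j : Fin k, (⨆ i : ℕ, m (i, j)) * (‖α j‖ ^ 2 * ‖x‖ ^ 2) = U * ‖x‖ ^ 2 := by
      rw [hUdef, Finset.sum_mul]
      exact Finset.sum_congr rfl fun j _ => by ring
    rw [h2] at h1
    refine hasSum_le (fun p => ?_) (hQ x) h1
    exact mul_le_mul_of_nonneg_right (le_ciSup (hba p.2) p.1) (by positivity)
  -- conclusion
  intro z hz
  have hzre : z = z.re := hsa.mem_spectrum_eq_re hz
  have hsymm := ContinuousLinearMap.isSelfAdjoint_iff_isSymmetric.mp hsa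
  -- real part of ⟪(z• - M) x, x⟫
  have hre : ∀ x : H, (⟪(algebraMap ℂ (H →L[ℂ] H) z - M) x, x⟫_ℂ).re
      = z.re * ‖x‖ ^ 2 - (⟪x, M x⟫_ℂ).re := by
    intro x
    have hMx : ⟪M x, x⟫_ℂ = ⟪x, M x⟫_ℂ := hsymm x x
    rw [ContinuousLinearMap.sub_apply, inner_sub_left, hMx]
    have : (algebraMap ℂ (H →L[ℂ] H) z) x = z • x := by
      simp [Algebra.algebraMap_eq_smul_one]
    rw [this, inner_smul_left]
    have him : (⟪x, x⟫_ℂ).im = 0 := by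
      exact inner_self_im (𝕜 := ℂ) x
    have hre2 : (⟪x, x⟫_ℂ).re = ‖x‖ ^ 2 := by
      exact inner_self_eq_norm_sq (𝕜 := ℂ) x
    simp only [Complex.sub_re, Complex.mul_re, Complex.conj_re, Complex.conj_im, him, hre2]
    ring
  refine ⟨z.re, ⟨?_, ?_⟩, hzre.symm⟩
  · -- L ≤ z.re
    by_contra hcon
    push_neg at hcon
    rw [spectrum.mem_iff] at hz
    refine hz ?_
    have hc : (0 : ℝ) < L - z.re := by linarith
    refine ContinuousLinearMap.isUnit_of_forall_le_norm_inner_map _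
      (c := ⟨L - z.re, hc.le⟩) (by exact_mod_cast hc) fun x => ?_
    have h1 : (⟪(algebraMap ℂ (H →L[ℂ] H) z - M) x, x⟫_ℂ).re ≤ -((L - z.re) * ‖x‖ ^ 2) := by
      rw [hre x]
      have := hlow x
      nlinarith [sq_nonneg ‖x‖]
    calc ‖x‖ ^ 2 * ((⟨L - z.re, hc.le⟩ : NNReal) : ℝ)
        = (L - z.re) * ‖x‖ ^ 2 := by push_cast; ring
      _ ≤ -((⟪(algebraMap ℂ (H →L[ℂ] H) z - M) x, x⟫_ℂ).re) := by linarith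
      _ ≤ |(⟪(algebraMap ℂ (H →L[ℂ] H) z - M) x, x⟫_ℂ).re| := neg_le_abs _
      _ ≤ ‖⟪(algebraMap ℂ (H →L[ℂ] H) z - M) x, x⟫_ℂ‖ := Complex.abs_re_le_norm _
  · -- z.re ≤ U
    by_contra hcon
    push_neg at hcon
    rw [spectrum.mem_iff] at hz
    refine hz ?_
    have hc : (0 : ℝ) < z.re - U := by linarith
    refine ContinuousLinearMap.isUnit_of_forall_le_norm_inner_map _
      (c := ⟨z.re - U, hc.le⟩) (by exact_mod_cast hc) fun x => ?_
    have h1 : (z.re - U) * ‖x‖ ^ 2 ≤ (⟪(algebraMap ℂ (H →L[ℂ] H) z - M) x, x⟫_ℂ).re := by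
      rw [hre x]
      have := hupp x
      nlinarith [sq_nonneg ‖x‖]
    calc ‖x‖ ^ 2 * ((⟨z.re - U, hc.le⟩ : NNReal) : ℝ)
        = (z.re - U) * ‖x‖ ^ 2 := by push_cast; ring
      _ ≤ (⟪(algebraMap ℂ (H →L[ℂ] H) z - M) x, x⟫_ℂ).re := h1
      _ ≤ |(⟪(algebraMap ℂ (H →L[ℂ] H) z - M) x, x⟫_ℂ).re| := le_abs_self _
      _ ≤ ‖⟪(algebraMap ℂ (H →L[ℂ] H) z - M) x, x⟫_ℂ‖ := Complex.abs_re_le_norm _
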